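/- Let p be a prime and A a ℤ/pℤ-graded commutative ring with components A_i such that A_0 is a local ring and A_1^p = A_0. Then there exists an element b ∈ A_1 which is a unit of A such that A_i = b^i·A_0 for each i = 0, 1, …, p−1; consequently a := b^p is a unit of A_0, and A is isomorphic as an A_0-algebra to A_0[t]/(t^p − a). -/

import Mathlib

open DirectSum Polynomial

section Aux

variable {A : Type*} [CommRing A] {p : ℕ}
variable (𝒜 : ZMod p → Submodule ℤ A) [GradedRing 𝒜]

lemma aux_pow_le (k : ℕ) : 𝒜 (1 : ZMod p) ^ k ≤ 𝒜 ((k : ℕ) : ZMod p) := by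
  induction k with
  | zero =>
    rw [pow_zero, Submodule.one_eq_span, Submodule.span_le, Set.singleton_subset_iff]
    simpa using SetLike.one_mem_graded 𝒜
  | succ n ih =>
    rw [pow_succ, Submodule.mul_le]
    intro m hm x hx
    have := SetLike.mul_mem_graded (ih hm) hx
    convert this using 2
    push_cast
    ring

lemma aux_sum_zero [NeZero p]
    (y : ℕ → A) (hy : ∀ i, i < p → y i ∈ 𝒜 ((i : ℕ) : ZMod p))
    (hsum : ∑ i ∈ Finset.range p, y i = 0) : ∀ j, j < p → y j = 0 := by
  intro j hj
  have h1 : (DirectSum.decompose 𝒜) (∑ i ∈ Finset.range p, y i) = 0 := by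
    rw [hsum]; simp
  rw [DirectSum.decompose_sum] at h1
  have h2 : ∑ i ∈ Finset.range p,
      ((DirectSum.decompose 𝒜 (y i)) ((j : ℕ) : ZMod p)) = 0 := by
    have := congrArg (DFinsupp.evalAddMonoidHom (β := fun i => 𝒜 i) ((j : ℕ) : ZMod p)) h1
    rwa [map_sum, map_zero] at this
  rw [Finset.sum_eq_single j] at h2
  · have := congrArg (Subtype.val) h2
    rwa [DirectSum.decompose_of_mem_same 𝒜 (hy j hj)] at this
  · intro i hi hne
    have : ((DirectSum.decompose 𝒜 (y i)) ((j : ℕ) : ZMod p) : A) = 0 := by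
      refine DirectSum.decompose_of_mem_ne 𝒜 (hy i (Finset.mem_range.mp hi)) ?_
      intro heq
      apply hne
      have := congrArg ZMod.val heq
      rwa [ZMod.val_cast_of_lt (Finset.mem_range.mp hi), ZMod.val_cast_of_lt hj] at this
    exact Subtype.coe_injective this
  · intro hjn
    exact absurd (Finset.mem_range.mpr hj) hjn
end Aux


section GradedSetup

variable {A : Type*} [CommRing A] {p : ℕ}
variable (𝒜 : ZMod p → Submodule ℤ A) [GradedRing 𝒜]

/-- The inclusion of the degree-zero subring `𝒜 0` into `A`, as a ring homomorphism. -/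
def gradeZeroInclusion : (𝒜 (0 : ZMod p)) →+* A where
  toFun x := x
  map_one' := rfl
  map_mul' _ _ := rfl
  map_zero' := rfl
  map_add' _ _ := rfl

/-- `A` is an algebra over its degree-zero subring `𝒜 0`. -/
noncomputable instance : Algebra (𝒜 (0 : ZMod p)) A := (gradeZeroInclusion 𝒜).toAlgebra

end GradedSetup

set_option maxHeartbeats 1000000 in
set_option synthInstance.maxHeartbeats 400000 in
/-- If `A` is a `ℤ/pℤ`-graded commutative ring with `𝒜 0` local and `(𝒜 1)^p = 𝒜 0`, then
there is a unit `b ∈ 𝒜 1` of `A` with `𝒜 i = b^i · 𝒜 0` for `i = 0, 1, …, p-1`; consequently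
`a := b^p` is a unit of `𝒜 0` and `A ≅ 𝒜 0[t]/(t^p - a)` as an `𝒜 0`-algebra. -/
theorem graded_local_ring_structure
    {A : Type*} [CommRing A] {p : ℕ} (hp : p.Prime)
    (𝒜 : ZMod p → Submodule ℤ A) [GradedRing 𝒜]
    (hloc : IsLocalRing (𝒜 (0 : ZMod p)))
    (h : 𝒜 (1 : ZMod p) ^ p = 𝒜 (0 : ZMod p)) :
    ∃ b ∈ 𝒜 (1 : ZMod p), IsUnit b ∧
      (∀ i : ℕ, i ≤ p - 1 →
        ∀ x : A, x ∈ 𝒜 (i : ZMod p) ↔ ∃ r ∈ 𝒜 (0 : ZMod p), x = b ^ i * r) ∧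
      ∃ hb : b ^ p ∈ 𝒜 (0 : ZMod p),
        IsUnit (⟨b ^ p, hb⟩ : 𝒜 (0 : ZMod p)) ∧
        Nonempty (A ≃ₐ[𝒜 (0 : ZMod p)]
          (Polynomial (𝒜 (0 : ZMod p)) ⧸
            Ideal.span {(Polynomial.X : Polynomial (𝒜 (0 : ZMod p))) ^ p
              - Polynomial.C (⟨b ^ p, hb⟩ : 𝒜 (0 : ZMod p))})) := by
  classical
  haveI : NeZero p := ⟨hp.ne_zero⟩
  haveI := hloc
  have halg : ∀ s : (𝒜 (0 : ZMod p)), algebraMap (𝒜 (0 : ZMod p)) A s = (s : A) := fun _ => rfl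
  -- 1 is in 𝒜 1 * 𝒜 1 ^ (p-1)
  have h1 : (1 : A) ∈ 𝒜 (1 : ZMod p) * 𝒜 (1 : ZMod p) ^ (p - 1) := by
    have h0 : (1 : A) ∈ 𝒜 (1 : ZMod p) ^ p := h ▸ SetLike.one_mem_graded 𝒜
    have e1 : 𝒜 (1 : ZMod p) ^ p = 𝒜 (1 : ZMod p) ^ ((p - 1) + 1) := by
      rw [Nat.sub_add_cancel hp.one_le]
    rw [e1, pow_succ'] at h0
    exact h0
  -- find a product m * n which is a unit of 𝒜 0
  have key : ∃ m ∈ 𝒜 (1 : ZMod p), ∃ n ∈ 𝒜 (1 : ZMod p) ^ (p - 1),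
      ∃ hmn : m * n ∈ 𝒜 (0 : ZMod p), IsUnit (⟨m * n, hmn⟩ : 𝒜 (0 : ZMod p)) := by
    by_contra hcon
    push_neg at hcon
    have hmain : ∃ h1' : (1 : A) ∈ 𝒜 (0 : ZMod p),
        (⟨1, h1'⟩ : 𝒜 (0 : ZMod p)) ∈ IsLocalRing.maximalIdeal (𝒜 (0 : ZMod p)) := by
      refine Submodule.mul_induction_on h1 ?_ ?_
      · intro m hm n hn
        have hmn : m * n ∈ 𝒜 (0 : ZMod p) := by
          have h2 := SetLike.mul_mem_graded hm (aux_pow_le 𝒜 (p - 1) hn)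
          have h3 : (1 : ZMod p) + ((p - 1 : ℕ) : ZMod p) = 0 := by
            rw [Nat.cast_sub hp.one_le]
            simp [ZMod.natCast_self]
          rwa [h3] at h2
        exact ⟨hmn, IsLocalRing.mem_maximalIdeal _ |>.mpr (hcon m hm n hn hmn)⟩
      · rintro x y ⟨hx0, hx⟩ ⟨hy0, hy⟩
        refine ⟨add_mem hx0 hy0, ?_⟩
        have e2 : (⟨x + y, add_mem hx0 hy0⟩ : 𝒜 (0 : ZMod p)) = ⟨x, hx0⟩ + ⟨y, hy0⟩ := rfl
        rw [e2]
        exact Ideal.add_mem _ hx hy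
    obtain ⟨h1', hmem⟩ := hmain
    have e3 : (⟨1, h1'⟩ : 𝒜 (0 : ZMod p)) = 1 := rfl
    rw [e3] at hmem
    exact (IsLocalRing.mem_maximalIdeal _ |>.mp hmem) isUnit_one
  obtain ⟨b, hm, n, hn, hmn, hu⟩ := key
  -- build the inverse c of b
  have huv : (b * n) * (((hu.unit⁻¹ : (𝒜 (0 : ZMod p))ˣ) : (𝒜 (0 : ZMod p))) : A) = 1 := by
    have e4 : (⟨b * n, hmn⟩ : 𝒜 (0 : ZMod p)) * ↑hu.unit⁻¹ = 1 := by
      simp [IsUnit.mul_val_inv]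
    exact congrArg Subtype.val e4
  set c := n * (((hu.unit⁻¹ : (𝒜 (0 : ZMod p))ˣ) : (𝒜 (0 : ZMod p))) : A) with hc_def
  have hbc : b * c = 1 := by
    rw [hc_def, ← mul_assoc]
    exact huv
  have hunit : IsUnit b := IsUnit.of_mul_eq_one c hbc
  have hcmem : c ∈ 𝒜 (-1 : ZMod p) := by
    have h2 := SetLike.mul_mem_graded (aux_pow_le 𝒜 (p - 1) hn)
      ((hu.unit⁻¹ : (𝒜 (0 : ZMod p))ˣ) : (𝒜 (0 : ZMod p))).2
    have h3 : ((p - 1 : ℕ) : ZMod p) + 0 = -1 := by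
      rw [Nat.cast_sub hp.one_le]
      simp [ZMod.natCast_self]
    rwa [h3] at h2
  -- powers of b and c
  have hbpow : ∀ i : ℕ, b ^ i ∈ 𝒜 ((i : ℕ) : ZMod p) := by
    intro i
    have h2 := SetLike.pow_mem_graded i hm
    rwa [show i • (1 : ZMod p) = ((i : ℕ) : ZMod p) by simp [nsmul_eq_mul]] at h2
  have hcpow : ∀ i : ℕ, c ^ i ∈ 𝒜 (-((i : ℕ) : ZMod p)) := by
    intro i
    have h2 := SetLike.pow_mem_graded i hcmem
    rwa [show i • (-1 : ZMod p) = -((i : ℕ) : ZMod p) by simp [nsmul_eq_mul]] at h2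
  have hbci : ∀ i : ℕ, b ^ i * c ^ i = 1 := by
    intro i
    rw [← mul_pow, hbc, one_pow]
  -- the key characterization, for every natural i
  have keyiff : ∀ (i : ℕ) (x : A),
      x ∈ 𝒜 ((i : ℕ) : ZMod p) ↔ ∃ r ∈ 𝒜 (0 : ZMod p), x = b ^ i * r := by
    intro i x
    constructor
    · intro hx
      refine ⟨c ^ i * x, ?_, ?_⟩
      · have h2 := SetLike.mul_mem_graded (hcpow i) hx
        rwa [neg_add_cancel] at h2
      · rw [← mul_assoc, hbci i, one_mul]
    · rintro ⟨r, hr, rfl⟩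
      have h2 := SetLike.mul_mem_graded (hbpow i) hr
      rwa [add_zero] at h2
  have hb : b ^ p ∈ 𝒜 (0 : ZMod p) := by
    have h2 := hbpow p
    rwa [ZMod.natCast_self] at h2
  have hc : c ^ p ∈ 𝒜 (0 : ZMod p) := by
    have h2 := hcpow p
    rwa [ZMod.natCast_self, neg_zero] at h2
  refine ⟨b, hm, hunit, fun i _ x => keyiff i x, hb, ?_, ?_⟩
  · refine isUnit_iff_exists_inv.mpr ⟨⟨c ^ p, hc⟩, ?_⟩
    exact Subtype.ext (hbci p)
  -- the algebra isomorphism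
  · have hsurj : Function.Surjective
        (Polynomial.aeval b : Polynomial (𝒜 (0 : ZMod p)) →ₐ[𝒜 (0 : ZMod p)] A) := by
      intro x
      have hx := DirectSum.sum_support_decompose 𝒜 x
      have hmem : x ∈ (Polynomial.aeval b :
          Polynomial (𝒜 (0 : ZMod p)) →ₐ[𝒜 (0 : ZMod p)] A).range := by
        rw [← hx]
        apply Subalgebra.sum_mem
        intro i _
        have hik : ((i.val : ℕ) : ZMod p) = i := ZMod.natCast_zmod_val i
        have hxi : ((DirectSum.decompose 𝒜 x i : 𝒜 i) : A) ∈ 𝒜 ((i.val : ℕ) : ZMod p) := by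
          rw [hik]; exact (DirectSum.decompose 𝒜 x i).2
        obtain ⟨r, hr, hrx⟩ := (keyiff i.val _).mp hxi
        refine (AlgHom.mem_range _).mpr
          ⟨Polynomial.C (⟨r, hr⟩ : (𝒜 (0 : ZMod p))) * Polynomial.X ^ i.val, ?_⟩
        rw [map_mul, Polynomial.aeval_C, Polynomial.aeval_X_pow, halg, hrx]
        exact mul_comm _ _
      exact hmem
    have haev : (Polynomial.aeval b)
        ((Polynomial.X : Polynomial (𝒜 (0 : ZMod p))) ^ p
          - Polynomial.C (⟨b ^ p, hb⟩ : 𝒜 (0 : ZMod p))) = 0 := by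
      rw [map_sub, Polynomial.aeval_X_pow, Polynomial.aeval_C, halg]
      simp
    have hmonic : ((Polynomial.X : Polynomial (𝒜 (0 : ZMod p))) ^ p
        - Polynomial.C (⟨b ^ p, hb⟩ : 𝒜 (0 : ZMod p))).Monic :=
      Polynomial.monic_X_pow_sub_C _ hp.ne_zero
    have hdegXp := Polynomial.degree_X_pow_sub_C hp.pos (⟨b ^ p, hb⟩ : 𝒜 (0 : ZMod p))
    have hker : RingHom.ker (Polynomial.aeval b :
          Polynomial (𝒜 (0 : ZMod p)) →ₐ[𝒜 (0 : ZMod p)] A)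
        = Ideal.span {(Polynomial.X : Polynomial (𝒜 (0 : ZMod p))) ^ p
          - Polynomial.C (⟨b ^ p, hb⟩ : 𝒜 (0 : ZMod p))} := by
      apply le_antisymm
      · intro f hf
        rw [RingHom.mem_ker] at hf
        have hdecomp : f %ₘ (Polynomial.X ^ p - Polynomial.C (⟨b ^ p, hb⟩ : 𝒜 (0 : ZMod p)))
            + (Polynomial.X ^ p - Polynomial.C (⟨b ^ p, hb⟩ : 𝒜 (0 : ZMod p)))
              * (f /ₘ (Polynomial.X ^ p - Polynomial.C (⟨b ^ p, hb⟩ : 𝒜 (0 : ZMod p)))) = f :=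
          Polynomial.modByMonic_add_div f _
        set g := f %ₘ (Polynomial.X ^ p - Polynomial.C (⟨b ^ p, hb⟩ : 𝒜 (0 : ZMod p)))
          with hg_def
        have hgev : (Polynomial.aeval b) g = 0 := by
          have h4 := congrArg (Polynomial.aeval b : Polynomial (𝒜 (0 : ZMod p))
            →ₐ[𝒜 (0 : ZMod p)] A) hdecomp
          rw [map_add, map_mul, haev, zero_mul, add_zero, hf] at h4
          exact h4
        have hgdeg : g.degree < (p : WithBot ℕ) := by
          rw [← hdegXp]
          exact Polynomial.degree_modByMonic_lt f hmonic
        have hgz : g = 0 := by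
          by_cases hg0 : g = 0
          · exact hg0
          have hnd : g.natDegree < p :=
            (Polynomial.natDegree_lt_iff_degree_lt hg0).mpr hgdeg
          have hsum : ∑ i ∈ Finset.range p, ((g.coeff i : A) * b ^ i) = 0 := by
            have h5 := Polynomial.aeval_eq_sum_range' hnd b
            rw [hgev] at h5
            have h6 : ∀ i ∈ Finset.range p, (g.coeff i) • b ^ i = (g.coeff i : A) * b ^ i := by
              intro i _
              rw [Algebra.smul_def, halg]
            rw [Finset.sum_congr rfl h6] at h5
            exact h5.symm
          have hz := aux_sum_zero 𝒜 (fun i => (g.coeff i : A) * b ^ i)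
            (fun i _ => by
              have h7 := SetLike.mul_mem_graded (g.coeff i).2 (hbpow i)
              rwa [zero_add] at h7)
            hsum
          apply Polynomial.ext
          intro i
          rw [Polynomial.coeff_zero]
          by_cases hi : i < p
          · have hzi : (g.coeff i : A) * b ^ i = 0 := hz i hi
            have h8 : (g.coeff i : A) = 0 := by
              have h9 : (g.coeff i : A) = ((g.coeff i : A) * b ^ i) * c ^ i := by
                rw [mul_assoc, hbci i, mul_one]
              rw [h9, hzi, zero_mul]
            exact Subtype.coe_injective h8
          · push_neg at hi
            exact Polynomial.coeff_eq_zero_of_degree_lt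
              (lt_of_lt_of_le hgdeg (by exact_mod_cast Nat.cast_le.mpr hi))
        rw [hgz, zero_add] at hdecomp
        exact Ideal.mem_span_singleton.mpr ⟨_, hdecomp.symm⟩
      · rw [Ideal.span_le, Set.singleton_subset_iff]
        exact haev
    exact ⟨(Ideal.quotientKerAlgEquivOfSurjective hsurj).symm.trans
      (Ideal.quotientEquivAlgOfEq (𝒜 (0 : ZMod p)) hker)⟩
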